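/- For t > 0 and n ∈ ℕ, the trace of the operator K_n (with kernel built from φ(z) = exp(t(z + 1/z)) as in the paper) satisfies tr K_n = ∑_{k=1}^∞ k · J_{n+k}(2t)², where J_m denotes the Bessel function of the first kind of order m. -/

import Mathlib

open Complex

/-- Bessel function of the first kind of integer order `k`. -/
noncomputable def besselJ (k : ℤ) (x : ℝ) : ℝ :=
  Real.pi⁻¹ * ∫ θ in (0 : ℝ)..Real.pi, Real.cos (k * θ - x * Real.sin θ)

/-- The `k`-th Laurent (Fourier) coefficient of `f` on the unit circle. -/
noncomputable def laurentCoeff (f : ℂ → ℂ) (k : ℤ) : ℂ :=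
  (2 * (Real.pi : ℂ))⁻¹ *
    ∫ θ in (0 : ℝ)..(2 * Real.pi), f (Complex.exp (I * θ)) * Complex.exp (-I * k * θ)

/-- Trace formula for the operator `K_n` built from `φ(z) = exp (t (z + 1/z))`,
with Wiener–Hopf factors `φ₊(z) = e^{tz}`, `φ₋(z) = e^{t/z}`:
`tr K_n = ∑_{k≥1} k J_{n+k}(2t)²`, where the kernel is
`K(i,j) = ∑_{k≥1} (φ₋/φ₊)_{i+k} (φ₊/φ₋)_{-k-j}` and the trace is the diagonal
sum over `i ≥ n`. -/
lemma integrand_eq (t : ℝ) (k : ℤ) (θ : ℝ) :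
    Complex.exp ((t:ℂ) * (Complex.exp (I*θ) - (Complex.exp (I*θ))⁻¹)) * Complex.exp (-I * k * θ)
      = Complex.exp (((2*t*Real.sin θ - k*θ : ℝ) : ℂ) * I) := by
  rw [← Complex.exp_neg, ← Complex.exp_add]
  congr 1
  have h1 : I * (θ:ℂ) = (θ:ℂ) * I := mul_comm _ _
  have h2 : -((θ:ℂ) * I) = ((-θ : ℝ):ℂ) * I := by push_cast; ring
  rw [h1, h2, Complex.exp_mul_I, Complex.exp_mul_I]
  rw [← Complex.ofReal_cos, ← Complex.ofReal_sin, ← Complex.ofReal_cos, ← Complex.ofReal_sin]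
  push_cast [Real.cos_neg, Real.sin_neg]
  ring

lemma sin_integral_zero (t : ℝ) (k : ℤ) :
    (∫ θ in (0:ℝ)..(2*Real.pi), Real.sin (2*t*Real.sin θ - k*θ)) = 0 := by
  set s : ℝ → ℝ := fun θ => Real.sin (2*t*Real.sin θ - k*θ) with hs
  have key : ∀ θ, s (2*Real.pi - θ) = - s θ := by
    intro θ
    simp only [hs]
    rw [Real.sin_two_pi_sub]
    have : 2*t*(-Real.sin θ) - k*(2*Real.pi - θ) = (-(2*t*Real.sin θ - k*θ)) + ((-k:ℤ):ℝ)*(2*Real.pi) := by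
      push_cast; ring
    rw [this, Real.sin_add_int_mul_two_pi, Real.sin_neg]
  have h1 : (∫ θ in (0:ℝ)..(2*Real.pi), s (2*Real.pi - θ)) = ∫ θ in (0:ℝ)..(2*Real.pi), s θ := by
    rw [intervalIntegral.integral_comp_sub_left s (2*Real.pi)]
    norm_num
  have h2 : (∫ θ in (0:ℝ)..(2*Real.pi), s (2*Real.pi - θ)) = - ∫ θ in (0:ℝ)..(2*Real.pi), s θ := by
    rw [intervalIntegral.integral_congr (g := fun θ => -s θ) (fun θ _ => key θ)]
    exact intervalIntegral.integral_neg
  linarith [h1.symm.trans h2]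

lemma cos_integral_eq (t : ℝ) (k : ℤ) :
    (∫ θ in (0:ℝ)..(2*Real.pi), Real.cos (2*t*Real.sin θ - k*θ))
      = 2 * ∫ θ in (0:ℝ)..Real.pi, Real.cos (k*θ - 2*t*Real.sin θ) := by
  set g : ℝ → ℝ := fun θ => Real.cos (k*θ - 2*t*Real.sin θ) with hg
  have hgc : Continuous g := by fun_prop
  have e1 : ∀ θ, Real.cos (2*t*Real.sin θ - k*θ) = g θ := by
    intro θ; simp only [hg]; rw [← Real.cos_neg]; ring_nf
  have key : ∀ θ, g (2*Real.pi - θ) = g θ := by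
    intro θ
    simp only [hg]
    rw [Real.sin_two_pi_sub]
    have : (k:ℝ)*(2*Real.pi - θ) - 2*t*(-Real.sin θ) = (-(k*θ - 2*t*Real.sin θ)) + ((k:ℤ):ℝ)*(2*Real.pi) := by
      push_cast; ring
    rw [this, Real.cos_add_int_mul_two_pi, Real.cos_neg]
  rw [intervalIntegral.integral_congr (g := g) (fun θ _ => e1 θ)]
  have split : (∫ θ in (0:ℝ)..(2*Real.pi), g θ)
      = (∫ θ in (0:ℝ)..Real.pi, g θ) + ∫ θ in Real.pi..(2*Real.pi), g θ := by
    rw [intervalIntegral.integral_add_adjacent_intervals] <;>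
      exact (hgc.intervalIntegrable _ _)
  have h2 : (∫ θ in Real.pi..(2*Real.pi), g θ) = ∫ θ in (0:ℝ)..Real.pi, g θ := by
    have : (∫ θ in Real.pi..(2*Real.pi), g θ)
        = ∫ θ in Real.pi..(2*Real.pi), g (2*Real.pi - θ) :=
      (intervalIntegral.integral_congr (fun θ _ => (key θ).symm))
    rw [this, intervalIntegral.integral_comp_sub_left g (2*Real.pi)]
    rw [show 2*Real.pi - Real.pi = Real.pi by ring, show 2*Real.pi - 2*Real.pi = (0:ℝ) by ring]
  rw [split, h2]; ring

lemma laurent_eq_bessel (t : ℝ) (k : ℤ) :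
    laurentCoeff (fun z => Complex.exp ((t:ℂ) * (z - z⁻¹))) k = ((besselJ k (2*t) : ℝ) : ℂ) := by
  have hπ : (Real.pi : ℝ) ≠ 0 := Real.pi_ne_zero
  rw [laurentCoeff, besselJ]
  have hint : (∫ θ in (0:ℝ)..(2*Real.pi),
      (fun z => Complex.exp ((t:ℂ) * (z - z⁻¹))) (Complex.exp (I*θ)) * Complex.exp (-I * k * θ))
      = ∫ θ in (0:ℝ)..(2*Real.pi),
        ((Real.cos (2*t*Real.sin θ - k*θ) : ℂ) + (Real.sin (2*t*Real.sin θ - k*θ) : ℂ) * I) := by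
    apply intervalIntegral.integral_congr
    intro θ _
    simp only
    rw [integrand_eq t k θ, Complex.exp_mul_I, ← Complex.ofReal_cos, ← Complex.ofReal_sin]
  rw [hint]
  have hc : IntervalIntegrable (fun θ:ℝ => (Real.cos (2*t*Real.sin θ - k*θ) : ℂ))
      MeasureTheory.volume 0 (2*Real.pi) := by
    apply Continuous.intervalIntegrable; fun_prop
  have hs : IntervalIntegrable (fun θ:ℝ => (Real.sin (2*t*Real.sin θ - k*θ) : ℂ) * I)
      MeasureTheory.volume 0 (2*Real.pi) := by
    apply Continuous.intervalIntegrable; fun_prop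
  rw [intervalIntegral.integral_add hc hs, intervalIntegral.integral_mul_const,
    intervalIntegral.integral_ofReal, intervalIntegral.integral_ofReal,
    sin_integral_zero t k, cos_integral_eq t k]
  push_cast
  field_simp
  ring

lemma besselJ_neg_arg (k : ℤ) (x : ℝ) : besselJ k (-x) = besselJ (-k) x := by
  rw [besselJ, besselJ]
  congr 1
  apply intervalIntegral.integral_congr
  intro θ _
  simp only
  rw [show (k:ℝ)*θ - (-x)*Real.sin θ = -((-k:ℤ)*θ - x*Real.sin θ) by push_cast; ring, Real.cos_neg]

lemma besselJ_neg_order (k : ℤ) (x : ℝ) : besselJ (-k) x = (-1:ℝ)^k * besselJ k x := by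
  have hne : (-1:ℝ) ≠ 0 := by norm_num
  have hsq : (-1:ℝ)^k * (-1:ℝ)^k = 1 := by
    rw [← zpow_add₀ hne, show k + k = 2*k by ring, zpow_mul]
    norm_num
  rw [besselJ, besselJ]
  have key : ∀ u:ℝ, (-1:ℝ)^k * Real.cos (k*(Real.pi-u) - x*Real.sin (Real.pi-u))
      = Real.cos ((-k:ℤ)*u - x*Real.sin u) := by
    intro u
    rw [Real.sin_pi_sub,
      show (k:ℝ)*(Real.pi-u) - x*Real.sin u = k*Real.pi - (k*u + x*Real.sin u) by ring,
      Real.cos_int_mul_pi_sub, ← mul_assoc, hsq, one_mul,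
      show ((-k:ℤ):ℝ)*u - x*Real.sin u = -(k*u + x*Real.sin u) by push_cast; ring,
      Real.cos_neg]
  have congr1 : (∫ θ in (0:ℝ)..Real.pi, Real.cos ((-k:ℤ)*θ - x*Real.sin θ))
      = ∫ θ in (0:ℝ)..Real.pi,
          (-1:ℝ)^k * Real.cos (k*(Real.pi-θ) - x*Real.sin (Real.pi-θ)) := by
    apply intervalIntegral.integral_congr
    intro θ _
    simp only
    rw [key θ]
  rw [congr1, intervalIntegral.integral_const_mul,
    intervalIntegral.integral_comp_sub_left
      (fun u => Real.cos (k*u - x*Real.sin u)) Real.pi,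
    sub_self, sub_zero]
  ring

lemma besselJ_abs_le_one (k : ℤ) (x : ℝ) : |besselJ k x| ≤ 1 := by
  rw [besselJ]
  have h : ‖∫ θ in (0:ℝ)..Real.pi, Real.cos (k*θ - x*Real.sin θ)‖ ≤ 1 * |Real.pi - 0| := by
    apply intervalIntegral.norm_integral_le_of_norm_le_const
    intro θ _
    rw [Real.norm_eq_abs]
    exact Real.abs_cos_le_one _
  rw [Real.norm_eq_abs] at h
  rw [abs_mul, abs_inv, abs_of_pos Real.pi_pos]
  rw [sub_zero, abs_of_pos Real.pi_pos, one_mul] at h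
  calc Real.pi⁻¹ * |∫ θ in (0:ℝ)..Real.pi, Real.cos (k*θ - x*Real.sin θ)|
      ≤ Real.pi⁻¹ * Real.pi := by
        apply mul_le_mul_of_nonneg_left h (inv_nonneg.2 Real.pi_pos.le)
    _ = 1 := inv_mul_cancel₀ Real.pi_ne_zero

lemma cos_helper (a θ c x : ℝ) : Real.cos a * (c - x*Real.cos θ)
    = c*Real.cos a - (x/2)*Real.cos (a - θ) - (x/2)*Real.cos (a + θ) := by
  rw [Real.cos_sub, Real.cos_add]; ring

lemma besselJ_recurrence (k : ℤ) (x : ℝ) (hx : x ≠ 0) :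
    besselJ (k-1) x + besselJ (k+1) x = (2*k/x) * besselJ k x := by
  have hπ := Real.pi_ne_zero
  set I : ℤ → ℝ := fun m => ∫ θ in (0:ℝ)..Real.pi, Real.cos (m*θ - x*Real.sin θ) with hI
  have hJ : ∀ m : ℤ, besselJ m x = Real.pi⁻¹ * I m := fun m => rfl
  have hderiv : ∀ θ ∈ Set.uIcc (0:ℝ) Real.pi,
      HasDerivAt (fun u => Real.sin (k*u - x*Real.sin u))
        (Real.cos (k*θ - x*Real.sin θ) * ((k:ℝ) - x*Real.cos θ)) θ := by
    intro θ _
    have hg : HasDerivAt (fun u:ℝ => (k:ℝ)*u - x*Real.sin u) ((k:ℝ) - x*Real.cos θ) θ := by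
      exact (((hasDerivAt_id' θ).const_mul (k:ℝ)).sub ((Real.hasDerivAt_sin θ).const_mul x)).congr_deriv (by ring)
    simpa [mul_comm] using (hg.sin)
  have hcont : IntervalIntegrable
      (fun θ => Real.cos (k*θ - x*Real.sin θ) * ((k:ℝ) - x*Real.cos θ))
      MeasureTheory.volume 0 Real.pi := by
    apply Continuous.intervalIntegrable; fun_prop
  have hFTC : (∫ θ in (0:ℝ)..Real.pi,
      Real.cos (k*θ - x*Real.sin θ) * ((k:ℝ) - x*Real.cos θ))
      = Real.sin (k*Real.pi - x*Real.sin Real.pi) - Real.sin (k*0 - x*Real.sin 0) :=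
    intervalIntegral.integral_eq_sub_of_hasDerivAt hderiv hcont
  simp only [Real.sin_pi, Real.sin_zero, mul_zero, sub_zero, Real.sin_int_mul_pi] at hFTC
  have hpt : ∀ θ:ℝ, Real.cos (k*θ - x*Real.sin θ) * ((k:ℝ) - x*Real.cos θ)
      = (k:ℝ)*Real.cos (k*θ - x*Real.sin θ)
        - (x/2)*Real.cos ((k-1:ℤ)*θ - x*Real.sin θ)
        - (x/2)*Real.cos ((k+1:ℤ)*θ - x*Real.sin θ) := by
    intro θ
    have e1 : ((k-1:ℤ):ℝ)*θ - x*Real.sin θ = ((k:ℝ)*θ - x*Real.sin θ) - θ := by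
      push_cast; ring
    have e2 : ((k+1:ℤ):ℝ)*θ - x*Real.sin θ = ((k:ℝ)*θ - x*Real.sin θ) + θ := by
      push_cast; ring
    rw [e1, e2]
    exact cos_helper _ θ k x
  have hA : IntervalIntegrable (fun θ => (k:ℝ)*Real.cos (k*θ - x*Real.sin θ))
      MeasureTheory.volume 0 Real.pi := by
    apply Continuous.intervalIntegrable; fun_prop
  have hB : IntervalIntegrable (fun θ => (x/2)*Real.cos ((k-1:ℤ)*θ - x*Real.sin θ))
      MeasureTheory.volume 0 Real.pi := by
    apply Continuous.intervalIntegrable; fun_prop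
  have hC : IntervalIntegrable (fun θ => (x/2)*Real.cos ((k+1:ℤ)*θ - x*Real.sin θ))
      MeasureTheory.volume 0 Real.pi := by
    apply Continuous.intervalIntegrable; fun_prop
  have hsplit : (∫ θ in (0:ℝ)..Real.pi,
      Real.cos (k*θ - x*Real.sin θ) * ((k:ℝ) - x*Real.cos θ))
      = (k:ℝ) * I k - (x/2) * I (k-1) - (x/2) * I (k+1) := by
    rw [intervalIntegral.integral_congr (g := fun θ =>
        (k:ℝ)*Real.cos (k*θ - x*Real.sin θ)
        - (x/2)*Real.cos ((k-1:ℤ)*θ - x*Real.sin θ)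
        - (x/2)*Real.cos ((k+1:ℤ)*θ - x*Real.sin θ)) (fun θ _ => hpt θ),
      intervalIntegral.integral_sub (hA.sub hB) hC,
      intervalIntegral.integral_sub hA hB,
      intervalIntegral.integral_const_mul, intervalIntegral.integral_const_mul,
      intervalIntegral.integral_const_mul]
  rw [hsplit] at hFTC
  have hx' : x*(I (k-1) + I (k+1)) = 2*k * I k := by linear_combination (-2:ℝ)*hFTC
  have h2 : I (k-1) + I (k+1) = (2*k/x) * I k := by
    field_simp
    linear_combination hx'
  rw [hJ, hJ, hJ, ← mul_add, h2]
  ring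

lemma fiber_tsum (a : ℕ → ℝ) (n : ℕ) :
    ∑' (y : (Finset.HasAntidiagonal.antidiagonal n : Finset (ℕ×ℕ))), a ((y:ℕ×ℕ).1 + (y:ℕ×ℕ).2)
      = ((n:ℝ)+1) * a n := by
  have h1 : ∀ y : (Finset.HasAntidiagonal.antidiagonal n : Finset (ℕ×ℕ)), a ((y:ℕ×ℕ).1 + (y:ℕ×ℕ).2) = a n := by
    rintro ⟨⟨p, q⟩, hy⟩
    rw [Finset.HasAntidiagonal.mem_antidiagonal] at hy
    simp [hy]
  rw [tsum_congr h1, tsum_fintype]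
  rw [Finset.sum_const, Finset.card_univ, Fintype.card_coe, Finset.Nat.card_antidiagonal,
    nsmul_eq_mul]
  push_cast
  ring

lemma tsum_shift_rearrange (a : ℕ → ℝ) (ha : ∀ m, 0 ≤ a m)
    (hsum : Summable (fun m : ℕ => ((m:ℝ)+1) * a m)) :
    ∑' (i:ℕ), ∑' (k:ℕ), a (i+k) = ∑' (m:ℕ), ((m:ℝ)+1) * a m := by
  set F : ℕ×ℕ → ℝ := fun p => a (p.1+p.2) with hF
  set G : (Σ n : ℕ, (Finset.HasAntidiagonal.antidiagonal n : Finset (ℕ×ℕ))) → ℝ :=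
    fun x => F (x.2 : ℕ×ℕ) with hGdef
  have hfiber : ∀ n, (∑' (y : (Finset.HasAntidiagonal.antidiagonal n : Finset (ℕ×ℕ))), G ⟨n, y⟩)
      = ((n:ℝ)+1) * a n := fun n => fiber_tsum a n
  have hGnonneg : ∀ x, 0 ≤ G x := fun x => ha _
  have hGfib : ∀ n, Summable (fun y : (Finset.HasAntidiagonal.antidiagonal n : Finset (ℕ×ℕ)) => G ⟨n, y⟩) :=
    fun n => (hasSum_fintype _).summable
  have hG : Summable G := by
    apply (summable_sigma_of_nonneg hGnonneg).mpr
    refine ⟨hGfib, ?_⟩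
    apply hsum.congr
    intro n
    exact (hfiber n).symm
  have hFs : Summable F := (Finset.HasAntidiagonal.sigmaAntidiagonalEquivProd.summable_iff).mp hG
  have h1 : ∑' (i:ℕ), ∑' (k:ℕ), a (i+k) = ∑' p : ℕ×ℕ, F p :=
    (Summable.tsum_prod' hFs (fun i => hFs.prod_factor i)).symm
  have h2 : (∑' p : ℕ×ℕ, F p) = ∑' x, G x :=
    (Finset.HasAntidiagonal.sigmaAntidiagonalEquivProd.tsum_eq F).symm
  have h3 : (∑' x, G x) = ∑' n, ∑' (y : (Finset.HasAntidiagonal.antidiagonal n : Finset (ℕ×ℕ))), G ⟨n, y⟩ :=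
    Summable.tsum_sigma' hGfib hG
  rw [h1, h2, h3, tsum_congr hfiber]

lemma besselJ_le_abs_div (k : ℤ) (hk : k ≠ 0) (x : ℝ) (hx : x ≠ 0) :
    |besselJ k x| ≤ |x| / |(k:ℝ)| := by
  have hrec := besselJ_recurrence k x hx
  have hk' : (0:ℝ) < |(k:ℝ)| := abs_pos.mpr (Int.cast_ne_zero.mpr hk)
  have hx' : (0:ℝ) < |x| := abs_pos.mpr hx
  have h3 : |besselJ (k-1) x + besselJ (k+1) x| ≤ 2 := by
    calc |besselJ (k-1) x + besselJ (k+1) x| ≤ |besselJ (k-1) x| + |besselJ (k+1) x| :=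
          abs_add_le _ _
      _ ≤ 2 := by linarith [besselJ_abs_le_one (k-1) x, besselJ_abs_le_one (k+1) x]
  have h5 : 2*|(k:ℝ)|/|x| * |besselJ k x| ≤ 2 := by
    have h4 : |2*(k:ℝ)/x| = 2*|(k:ℝ)|/|x| := by
      rw [abs_div, abs_mul]; norm_num
    rw [← h4, ← abs_mul, ← hrec]
    exact h3
  rw [div_mul_eq_mul_div, div_le_iff₀ hx'] at h5
  rw [le_div_iff₀ hk']
  nlinarith [abs_nonneg (besselJ k x)]

lemma besselJ_le_sq (k : ℤ) (hk : 2 ≤ k) (x : ℝ) (hx : x ≠ 0) :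
    |besselJ k x| ≤ x^2 / (((k:ℝ)-1)*(k:ℝ)) := by
  have hkR : (2:ℝ) ≤ (k:ℝ) := by exact_mod_cast hk
  have hk0 : (k:ℝ) ≠ 0 := by linarith
  have hx' : (0:ℝ) < |x| := abs_pos.mpr hx
  have hJk : besselJ k x = x/(2*(k:ℝ)) * (besselJ (k-1) x + besselJ (k+1) x) := by
    rw [besselJ_recurrence k x hx]
    field_simp
  have e1 : |besselJ (k-1) x| ≤ |x| / ((k:ℝ)-1) := by
    have := besselJ_le_abs_div (k-1) (by omega) x hx
    have hcast : |((k-1:ℤ):ℝ)| = (k:ℝ)-1 := by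
      rw [abs_of_pos] <;> push_cast <;> linarith
    rwa [hcast] at this
  have e2 : |besselJ (k+1) x| ≤ |x| / ((k:ℝ)-1) := by
    have := besselJ_le_abs_div (k+1) (by omega) x hx
    have hcast : |((k+1:ℤ):ℝ)| = (k:ℝ)+1 := by
      rw [abs_of_pos] <;> push_cast <;> linarith
    rw [hcast] at this
    refine this.trans ?_
    apply div_le_div_of_nonneg_left (abs_nonneg x) (by linarith) (by linarith)
  have hsum : |besselJ (k-1) x + besselJ (k+1) x| ≤ 2*|x|/((k:ℝ)-1) := by
    calc |besselJ (k-1) x + besselJ (k+1) x| ≤ |besselJ (k-1) x| + |besselJ (k+1) x| :=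
          abs_add_le _ _
      _ ≤ 2*|x|/((k:ℝ)-1) := by
          rw [show 2*|x|/((k:ℝ)-1) = |x|/((k:ℝ)-1) + |x|/((k:ℝ)-1) by ring]
          linarith
  calc |besselJ k x| = |x|/(2*(k:ℝ)) * |besselJ (k-1) x + besselJ (k+1) x| := by
        rw [hJk, abs_mul, abs_div, abs_mul, abs_of_pos (by norm_num : (0:ℝ) < 2), abs_of_pos (by linarith : (0:ℝ) < (k:ℝ))]
    _ ≤ |x|/(2*(k:ℝ)) * (2*|x|/((k:ℝ)-1)) := by
        apply mul_le_mul_of_nonneg_left hsum (by positivity)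
    _ = x^2 / (((k:ℝ)-1)*(k:ℝ)) := by
        rw [div_mul_div_comm,
          show |x| * (2*|x|) = 2*x^2 by
            rw [show |x| * (2 * |x|) = 2 * (|x| * |x|) by ring, abs_mul_abs_self]; ring]
        rw [div_eq_div_iff (by nlinarith) (by nlinarith)]
        ring


set_option maxHeartbeats 2000000 in
lemma master_summable (t : ℝ) (ht : 0 < t) (n : ℕ) :
    Summable (fun m : ℕ => ((m:ℝ)+1) * besselJ ((n:ℤ)+m+1) (2*t) ^ 2) := by
  have hx : (2*t) ≠ 0 := by positivity
  set C : ℝ := 64*t^4 + 1 with hC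
  have hbnd : ∀ m:ℕ, ((m:ℝ)+1) * besselJ ((n:ℤ)+m+1) (2*t) ^ 2 ≤ C/((m:ℝ)+1)^2 := by
    intro m
    rcases Nat.eq_zero_or_pos m with h0 | h1
    · subst h0
      have h := besselJ_abs_le_one ((n:ℤ)+(0:ℕ)+1) (2*t)
      have ht4 : (0:ℝ) ≤ 64*t^4 := by positivity
      norm_num at h ⊢
      rw [hC]
      nlinarith [abs_nonneg (besselJ ((n:ℤ)+1) (2*t)), _root_.sq_abs (besselJ ((n:ℤ)+1) (2*t))]
    · set J : ℝ := besselJ ((n:ℤ)+m+1) (2*t) with hJdef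
      set M : ℝ := (m:ℝ)+1 with hM
      have hM2 : (2:ℝ) ≤ M := by
        have : (1:ℝ) ≤ (m:ℝ) := by exact_mod_cast h1
        rw [hM]; linarith
      have hMpos : (0:ℝ) < M := by linarith
      have hk2 : (2:ℤ) ≤ (n:ℤ)+m+1 := by omega
      have hkR : (((n:ℤ)+m+1 : ℤ):ℝ) = (n:ℝ)+(m:ℝ)+1 := by push_cast; ring
      have hkM : M ≤ (((n:ℤ)+m+1 : ℤ):ℝ) := by
        rw [hkR, hM]
        have : (0:ℝ) ≤ (n:ℝ) := Nat.cast_nonneg n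
        linarith
      have hkpos : (0:ℝ) < (((n:ℤ)+m+1 : ℤ):ℝ) := lt_of_lt_of_le hMpos hkM
      have hJ1 := besselJ_le_sq ((n:ℤ)+m+1) hk2 (2*t) hx
      -- |J| ≤ 8 t^2 / M^2
      have hb : |J| ≤ 8*t^2/M^2 := by
        refine hJ1.trans ?_
        rw [div_le_div_iff₀ (by nlinarith) (by positivity)]
        have haux : (0:ℝ) ≤ ((((n:ℤ)+m+1 : ℤ):ℝ) - M) * ((((n:ℤ)+m+1 : ℤ):ℝ) + M - 1) :=
          mul_nonneg (by linarith) (by linarith)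
        have hcstep : M^2 ≤ 2*((((n:ℤ)+m+1 : ℤ):ℝ) - 1)*(((n:ℤ)+m+1 : ℤ):ℝ) := by nlinarith
        nlinarith [mul_le_mul_of_nonneg_left hcstep (sq_nonneg t)]
      have hb' : |J| * M^2 ≤ 8*t^2 := by
        rw [← le_div_iff₀ (by positivity)]
        exact hb
      have hsq : (|J| * M^2)^2 ≤ (8*t^2)^2 := by
        apply pow_le_pow_left₀ (by positivity) hb'
      rw [le_div_iff₀ (by positivity)]
      rw [mul_pow, _root_.sq_abs] at hsq
      have hint : (0:ℝ) ≤ M^3*(M-1)*J^2 :=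
        mul_nonneg (mul_nonneg (by positivity) (by linarith)) (sq_nonneg J)
      rw [hC]
      nlinarith [hsq, hint, sq_nonneg J]
  have hnn : ∀ m:ℕ, 0 ≤ ((m:ℝ)+1) * besselJ ((n:ℤ)+m+1) (2*t) ^ 2 := by
    intro m; positivity
  apply Summable.of_nonneg_of_le hnn hbnd
  have h1 : Summable (fun m:ℕ => 1/((m:ℝ))^2) :=
    Real.summable_one_div_nat_pow.mpr one_lt_two
  have h2 : Summable (fun m:ℕ => 1/((m+1:ℕ):ℝ)^2) := (summable_nat_add_iff 1).mpr h1
  have h3 : Summable (fun m:ℕ => C * (1/((m+1:ℕ):ℝ)^2)) := h2.mul_left C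
  apply h3.congr
  intro m
  push_cast
  ring

lemma neg_one_zpow_sq (m : ℤ) : (-1:ℝ)^m * (-1:ℝ)^m = 1 := by
  rw [← zpow_add₀ (by norm_num : (-1:ℝ) ≠ 0), show m + m = 2*m by ring, zpow_mul]
  norm_num

lemma term_eq (t : ℝ) (n i k : ℕ) :
    laurentCoeff (fun z => Complex.exp ((t:ℂ) * (z⁻¹ - z))) (((n:ℤ) + (i:ℤ)) + ((k:ℤ) + 1)) *
      laurentCoeff (fun z => Complex.exp ((t:ℂ) * (z - z⁻¹))) (-((k:ℤ) + 1) - ((n:ℤ) + (i:ℤ)))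
      = ((besselJ ((n:ℤ) + ((i+k : ℕ):ℤ) + 1) (2*t) ^ 2 : ℝ) : ℂ) := by
  have hf : (fun z:ℂ => Complex.exp ((t:ℂ) * (z⁻¹ - z)))
      = fun z => Complex.exp ((((-t : ℝ)):ℂ) * (z - z⁻¹)) := by
    funext z
    congr 1
    push_cast
    ring
  rw [hf, laurent_eq_bessel (-t), laurent_eq_bessel t,
    show (((n:ℤ) + (i:ℤ)) + ((k:ℤ) + 1)) = ((n:ℤ) + ((i+k : ℕ):ℤ) + 1) by push_cast; ring,
    show (-((k:ℤ) + 1) - ((n:ℤ) + (i:ℤ))) = -((n:ℤ) + ((i+k : ℕ):ℤ) + 1) by push_cast; ring,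
    show 2*(-t) = -(2*t) by ring, besselJ_neg_arg, besselJ_neg_order]
  rw [← Complex.ofReal_mul]
  congr 1
  set m : ℤ := (n:ℤ) + ((i+k : ℕ):ℤ) + 1
  set J : ℝ := besselJ m (2*t)
  calc (-1:ℝ)^m * J * ((-1:ℝ)^m * J) = ((-1:ℝ)^m * (-1:ℝ)^m) * (J*J) := by ring
    _ = J^2 := by rw [neg_one_zpow_sq]; ring

theorem stmt_9 (t : ℝ) (ht : 0 < t) (n : ℕ)
    (K : ℤ → ℤ → ℂ)
    (hK : ∀ i j : ℤ, K i j =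
      ∑' (k : ℕ), laurentCoeff (fun z => Complex.exp (t * (z⁻¹ - z))) (i + (k + 1)) *
        laurentCoeff (fun z => Complex.exp (t * (z - z⁻¹))) (-(k + 1) - j)) :
    ∑' (i : ℕ), K (n + i) (n + i) =
      ∑' (k : ℕ), (((k : ℝ) + 1) * besselJ (n + k + 1) (2 * t) ^ 2 : ℝ) := by
  have hsum := master_summable t ht n
  set a : ℕ → ℝ := fun m => besselJ ((n:ℤ)+m+1) (2*t)^2 with ha
  have hnn : ∀ m, 0 ≤ a m := fun m => sq_nonneg _
  calc ∑' (i : ℕ), K (n + i) (n + i)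
      = ∑' (i : ℕ), ((∑' (k : ℕ), a (i+k) : ℝ) : ℂ) := by
        apply tsum_congr
        intro i
        rw [hK]
        exact (tsum_congr (fun k => term_eq t n i k)).trans (Complex.ofReal_tsum _).symm
    _ = ((∑' (i : ℕ), ∑' (k : ℕ), a (i+k) : ℝ) : ℂ) := (Complex.ofReal_tsum _).symm
    _ = ((∑' (m : ℕ), ((m:ℝ)+1) * a m : ℝ) : ℂ) := by
        rw [tsum_shift_rearrange a hnn hsum]
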